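/- Let T_1, ..., T_M be firmly nonexpansive operators on ℝ^d, let 𝒯 = (1/M) Σ_{i=1}^M T_i, let g_i(x) = x − T_i(x), let x⋆ be a fixed point of 𝒯, and let σ² = (1/M) Σ_{i=1}^M ‖x⋆ − T_i(x⋆)‖². Let H ≥ 1 be an integer, let 0 = t_0 < t_1 < t_2 < ... be integers with t_n − t_{n−1} ≤ H for all n ≥ 1, and let λ satisfy 0 < λ ≤ 1/(8·max(1, H−1)). Define sequences (x_i^k)_{k∈ℕ}, i = 1,...,M, in ℝ^d by: x_i^0 = x̂^0 for all i and some x̂^0 ∈ ℝ^d; for each k, set h_i^{k+1} = x_i^k − λ g_i(x_i^k); if k+1 = t_n for some n then x_i^{k+1} = (1/M) Σ_{j=1}^M h_j^{k+1} for all i, otherwise x_i^{k+1} = h_i^{k+1}. Let x̂^k = (1/M) Σ_{i=1}^M x_i^k. Then for every integer T ≥ 1, (1/T) Σ_{k=0}^{T−1} ‖x̂^k − 𝒯(x̂^k)‖² ≤ 3‖x̂^0 − x⋆‖²/(λT) + 36λ²(H−1)²σ². -/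

import Mathlib

set_option maxHeartbeats 1000000

open Finset

section AuxLemmas
variable {E : Type*} [NormedAddCommGroup E] [InnerProductSpace ℝ E]

private lemma aux_expand_sub (u v : E) :
    ‖u - v‖ ^ 2 = ‖u‖ ^ 2 - 2 * inner ℝ u v + ‖v‖ ^ 2 := by
  rw [← real_inner_self_eq_norm_sq, ← real_inner_self_eq_norm_sq,
    ← real_inner_self_eq_norm_sq, inner_sub_sub_self, real_inner_comm v u]; ring

private lemma aux_coco (u v : E) (h : ‖u‖ ^ 2 ≤ ‖v‖ ^ 2 - ‖u - v‖ ^ 2) :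
    ‖v - u‖ ^ 2 ≤ inner ℝ (v - u) v := by
  have h1 := aux_expand_sub u v
  have h2 := aux_expand_sub v u
  have h3 : (inner ℝ (v - u) v : ℝ) = ‖v‖ ^ 2 - inner ℝ u v := by
    rw [inner_sub_left, real_inner_self_eq_norm_sq]
  have hc : (inner ℝ v u : ℝ) = inner ℝ u v := real_inner_comm u v
  rw [h2, h3]; linarith

private lemma aux_sum_sq {ι : Type*} (s : Finset ι) (w : ι → E) :
    ‖∑ j ∈ s, w j‖ ^ 2 ≤ (s.card : ℝ) * ∑ j ∈ s, ‖w j‖ ^ 2 := by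
  have h1 : ‖∑ j ∈ s, w j‖ ≤ ∑ j ∈ s, ‖w j‖ := norm_sum_le s w
  have h2 : (∑ j ∈ s, ‖w j‖) ^ 2 ≤ (s.card : ℝ) * ∑ j ∈ s, ‖w j‖ ^ 2 := by
    exact_mod_cast sq_sum_le_card_mul_sum_sq (s := s) (f := fun j => ‖w j‖)
  calc ‖∑ j ∈ s, w j‖ ^ 2 ≤ (∑ j ∈ s, ‖w j‖) ^ 2 :=
        pow_le_pow_left₀ (norm_nonneg _) h1 2
    _ ≤ _ := h2

private lemma aux_two_sq (a b : E) : ‖a + b‖ ^ 2 ≤ 2 * ‖a‖ ^ 2 + 2 * ‖b‖ ^ 2 := by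
  nlinarith [norm_add_le a b, norm_nonneg a, norm_nonneg b, norm_nonneg (a + b),
    sq_nonneg (‖a‖ - ‖b‖)]

private lemma aux_var {M : ℕ} (hM : 0 < M) (v : Fin M → E) :
    ∑ i, ‖v i - (M : ℝ)⁻¹ • ∑ j, v j‖ ^ 2 ≤ ∑ i, ‖v i‖ ^ 2 := by
  have hM' : (M : ℝ) ≠ 0 := Nat.cast_ne_zero.mpr hM.ne'
  set m : E := (M : ℝ)⁻¹ • ∑ j, v j with hm
  have hsum : ∑ j, v j = (M : ℝ) • m := by
    rw [hm, smul_smul, mul_inv_cancel₀ hM', one_smul]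
  have hin : ∑ i, (inner ℝ (v i) m : ℝ) = (M : ℝ) * ‖m‖ ^ 2 := by
    rw [← sum_inner, hsum, real_inner_smul_left, real_inner_self_eq_norm_sq]
  have hkey : ∑ i, ‖v i - m‖ ^ 2 = ∑ i, ‖v i‖ ^ 2 - (M : ℝ) * ‖m‖ ^ 2 := by
    simp only [aux_expand_sub]
    rw [Finset.sum_add_distrib, Finset.sum_sub_distrib, ← Finset.mul_sum, hin,
      Finset.sum_const, Finset.card_univ, Fintype.card_fin, nsmul_eq_mul]
    ring
  have : 0 ≤ (M : ℝ) * ‖m‖ ^ 2 := by positivity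
  linarith

private lemma aux_mean_const {M : ℕ} (hM : 0 < M) (c : E) :
    (M : ℝ)⁻¹ • ∑ _i : Fin M, c = c := by
  have hM' : (M : ℝ) ≠ 0 := Nat.cast_ne_zero.mpr hM.ne'
  rw [Finset.sum_const, Finset.card_univ, Fintype.card_fin, ← Nat.cast_smul_eq_nsmul ℝ,
    smul_smul, inv_mul_cancel₀ hM', one_smul]

end AuxLemmas

private lemma aux_swap (f : ℕ → ℝ) (hf : ∀ j, 0 ≤ f j) (m T : ℕ) :
    ∑ k ∈ range T, ∑ j ∈ Ico (k - m) k, f j ≤ (m : ℝ) * ∑ j ∈ range T, f j := by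
  have step1 : ∀ k ∈ range T, ∑ j ∈ Ico (k - m) k, f j
      = ∑ j ∈ range T, if j ∈ Ico (k - m) k then f j else 0 := by
    intro k hk
    have hsub : Ico (k - m) k ⊆ range T := by
      intro j hj
      simp only [mem_Ico] at hj
      simp only [mem_range] at hk ⊢
      omega
    rw [Finset.sum_ite_mem, Finset.inter_eq_right.mpr hsub]
  calc ∑ k ∈ range T, ∑ j ∈ Ico (k - m) k, f j
      = ∑ k ∈ range T, ∑ j ∈ range T, if j ∈ Ico (k - m) k then f j else 0 :=
        Finset.sum_congr rfl step1
    _ = ∑ j ∈ range T, ∑ k ∈ range T, if j ∈ Ico (k - m) k then f j else 0 :=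
        Finset.sum_comm
    _ ≤ ∑ j ∈ range T, (m : ℝ) * f j := by
        apply Finset.sum_le_sum
        intro j hj
        have e1 : ∀ k, (if j ∈ Ico (k - m) k then f j else 0)
            = if k ∈ Ioc j (j + m) then f j else 0 := by
          intro k
          simp only [mem_Ico, mem_Ioc]
          exact if_congr (by omega) rfl rfl
        rw [Finset.sum_congr rfl (fun k _ => e1 k), Finset.sum_ite_mem]
        rw [Finset.sum_const, nsmul_eq_mul]
        have hc : ((range T ∩ Ioc j (j + m)).card : ℝ) ≤ (m : ℝ) := by
          have h1 := Finset.card_le_card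
            (Finset.inter_subset_right (s₁ := range T) (s₂ := Ioc j (j + m)))
          have h2 : (Ioc j (j + m)).card = m := by rw [Nat.card_Ioc]; omega
          exact_mod_cast h2 ▸ h1
        exact mul_le_mul_of_nonneg_right hc (hf j)
    _ = (m : ℝ) * ∑ j ∈ range T, f j := by rw [Finset.mul_sum]

private lemma aux_exchange {ι κ : Type*} [Fintype ι] (a c : ℝ) (s : Finset κ)
    (f : ι → κ → ℝ) :
    a * ∑ i, (c * ∑ j ∈ s, f i j) = c * ∑ j ∈ s, (a * ∑ i, f i j) := by
  simp only [← Finset.mul_sum]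
  rw [Finset.sum_comm]
  ring

/-- Theorem 2: ergodic rate of Algorithm 1 for firmly
nonexpansive operators. -/
theorem stmt_14 (d M : ℕ) (hM : 0 < M)
    (A : Fin M → EuclideanSpace ℝ (Fin d) → EuclideanSpace ℝ (Fin d))
    (hA : ∀ i, ∀ x y, ‖A i x - A i y‖ ^ 2
      ≤ ‖x - y‖ ^ 2 - ‖A i x - x - A i y + y‖ ^ 2)
    (g : Fin M → EuclideanSpace ℝ (Fin d) → EuclideanSpace ℝ (Fin d))
    (hg : ∀ i x, g i x = x - A i x)
    (xs : EuclideanSpace ℝ (Fin d)) (hxs : (M : ℝ)⁻¹ • ∑ i, A i xs = xs)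
    (σ2 : ℝ) (hσ2 : σ2 = (M : ℝ)⁻¹ * ∑ i, ‖xs - A i xs‖ ^ 2)
    (H : ℕ) (hH : 1 ≤ H)
    (t : ℕ → ℕ) (ht0 : t 0 = 0) (htmono : StrictMono t)
    (htH : ∀ n : ℕ, t (n + 1) - t n ≤ H)
    (l : ℝ) (hl0 : 0 < l) (hl1 : l ≤ 1 / (8 * max 1 ((H : ℝ) - 1)))
    (x : Fin M → ℕ → EuclideanSpace ℝ (Fin d))
    (x0 : EuclideanSpace ℝ (Fin d)) (hinit : ∀ i, x i 0 = x0)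
    (hrecC : ∀ k : ℕ, (∃ n, k + 1 = t n) → ∀ i,
      x i (k + 1) = (M : ℝ)⁻¹ • ∑ j, (x j k - l • g j (x j k)))
    (hrecN : ∀ k : ℕ, (¬ ∃ n, k + 1 = t n) → ∀ i,
      x i (k + 1) = x i k - l • g i (x i k))
    (xhat : ℕ → EuclideanSpace ℝ (Fin d))
    (hxhat : ∀ k, xhat k = (M : ℝ)⁻¹ • ∑ i, x i k) :
    ∀ N : ℕ, 1 ≤ N →
      (N : ℝ)⁻¹ * ∑ k ∈ Finset.range N,
          ‖xhat k - (M : ℝ)⁻¹ • ∑ i, A i (xhat k)‖ ^ 2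
        ≤ 3 * ‖x0 - xs‖ ^ 2 / (l * (N : ℝ))
          + 36 * l ^ 2 * ((H : ℝ) - 1) ^ 2 * σ2 := by
  intro N hN
  have hM' : (M : ℝ) ≠ 0 := Nat.cast_ne_zero.mpr hM.ne'
  have hMpos : (0 : ℝ) < M := by exact_mod_cast hM
  -- the mean residual
  set gb : ℕ → EuclideanSpace ℝ (Fin d) := fun k => (M : ℝ)⁻¹ • ∑ i, g i (x i k) with hgb
  -- residuals at the fixed point sum to zero
  have hgstar : ∑ i, g i xs = 0 := by
    have h1 : ∑ i, A i xs = (M : ℝ) • xs := by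
      have h0 : (M : ℝ) • ((M : ℝ)⁻¹ • ∑ i, A i xs) = (M : ℝ) • xs := by rw [hxs]
      rwa [smul_smul, mul_inv_cancel₀ hM', one_smul] at h0
    have h2 : ∑ i, g i xs = ∑ i : Fin M, xs - ∑ i, A i xs := by
      rw [← Finset.sum_sub_distrib]
      exact Finset.sum_congr rfl fun i _ => by rw [hg]
    rw [h2, h1, Finset.sum_const, Finset.card_univ, Fintype.card_fin,
      ← Nat.cast_smul_eq_nsmul ℝ, sub_self]
  -- cocoercivity of the residuals
  have hcoco : ∀ i (a b : EuclideanSpace ℝ (Fin d)), ‖g i a - g i b‖ ^ 2 ≤ inner ℝ (g i a - g i b) (a - b) := by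
    intro i a b
    have h := aux_coco (A i a - A i b) (a - b) (by
      have := hA i a b
      have he : A i a - A i b - (a - b) = A i a - a - A i b + b := by abel
      rw [he]; exact this)
    have he2 : (a - b) - (A i a - A i b) = g i a - g i b := by
      rw [hg, hg]; abel
    rw [he2] at h
    exact h
  -- squared nonexpansiveness of the residuals
  have hne2 : ∀ i (a b : EuclideanSpace ℝ (Fin d)), ‖g i a - g i b‖ ^ 2 ≤ ‖a - b‖ ^ 2 := by
    intro i a b
    have h1 := hcoco i a b
    have h2 := real_inner_le_norm (g i a - g i b) (a - b)
    nlinarith [norm_nonneg (g i a - g i b), norm_nonneg (a - b),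
      sq_nonneg (‖g i a - g i b‖ - ‖a - b‖)]
  -- initial point
  have hxhat0 : xhat 0 = x0 := by
    rw [hxhat]
    have : ∀ i : Fin M, x i 0 = x0 := hinit
    rw [Finset.sum_congr rfl fun i _ => this i]
    exact aux_mean_const hM x0
  -- mean recursion
  have hmean_rec : ∀ k, xhat (k + 1) = xhat k - l • gb k := by
    intro k
    have key : (M : ℝ)⁻¹ • ∑ j, (x j k - l • g j (x j k)) = xhat k - l • gb k := by
      rw [Finset.sum_sub_distrib, smul_sub, hxhat, hgb, ← Finset.smul_sum, smul_comm]
    by_cases hs : ∃ n, k + 1 = t n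
    · rw [hxhat (k + 1), Finset.sum_congr rfl fun i _ => hrecC k hs i,
        aux_mean_const hM]
      exact key
    · rw [hxhat (k + 1), Finset.sum_congr rfl fun i _ => hrecN k hs i]
      exact key
  -- all agents agree at synchronization times
  have heq_sync : ∀ k, (k = 0 ∨ ∃ n, k = t n) → ∀ i, x i k = xhat k := by
    intro k hk i
    rcases k with _ | j
    · rw [hinit, hxhat0]
    · rcases hk with h0 | ⟨n, hn⟩
      · exact absurd h0 (Nat.succ_ne_zero j)
      · have hs : ∃ n, j + 1 = t n := ⟨n, hn⟩
        rw [hrecC j hs i, hxhat]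
        rw [Finset.sum_congr rfl fun i' _ => hrecC j hs i', aux_mean_const hM]
  -- block representation between synchronization times
  have hblock : ∀ n j, t n ≤ j → j < t (n + 1) → ∀ i,
      x i j - xhat j = (-l) • ∑ jj ∈ Ico (t n) j, (g i (x i jj) - gb jj) := by
    intro n j
    induction j with
    | zero =>
      intro h1 _ i
      have h0 : t n = 0 := Nat.le_zero.mp h1
      have he : x i 0 = xhat 0 := heq_sync 0 (Or.inl rfl) i
      simp [h0, he]
    | succ jj ih =>
      intro h1 h2 i
      by_cases hb : t n = jj + 1
      · have he : x i (jj + 1) = xhat (jj + 1) := heq_sync (jj + 1) (Or.inr ⟨n, hb.symm⟩) i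
        simp [hb, he]
      · have h1' : t n ≤ jj := by omega
        have h2' : jj < t (n + 1) := by omega
        have hns : ¬∃ m, jj + 1 = t m := by
          rintro ⟨m, hm⟩
          have hlt1 : t n < t m := by omega
          have hm1 : n < m := htmono.lt_iff_lt.mp hlt1
          have hge : t (n + 1) ≤ t m := htmono.monotone (by omega)
          omega
        have hxr : x i (jj + 1) = x i jj - l • g i (x i jj) := hrecN jj hns i
        have hxh : xhat (jj + 1) = xhat jj - l • gb jj := hmean_rec jj
        rw [hxr, hxh, Finset.sum_Ico_succ_top h1', smul_add, ← ih h1' h2' i]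
        simp only [smul_sub, neg_smul]
        abel
  -- every time lies in a synchronization window of length at most H
  have hex : ∀ k : ℕ, ∃ n, t n ≤ k ∧ k < t (n + 1) ∧ k - t n ≤ H - 1 := by
    intro k
    have hub : ∃ m, k < t m :=
      ⟨k + 1, lt_of_lt_of_le (Nat.lt_succ_self k) htmono.le_apply⟩
    obtain ⟨n, hn⟩ : ∃ n, Nat.find hub = n + 1 := by
      have hne : Nat.find hub ≠ 0 := by
        intro h0
        have := Nat.find_spec hub
        rw [h0, ht0] at this
        omega
      exact ⟨Nat.find hub - 1, by omega⟩
    have hm : k < t (n + 1) := hn ▸ Nat.find_spec hub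
    have hle : t n ≤ k := by
      by_contra hlt
      push_neg at hlt
      exact Nat.find_min hub (by omega) hlt
    exact ⟨n, hle, hm, by have := htH n; omega⟩
  -- real auxiliary sequences
  set S : ℕ → ℝ := fun k => (M : ℝ)⁻¹ * ∑ i, ‖g i (x i k) - g i xs‖ ^ 2 with hS
  set D : ℕ → ℝ := fun k => (M : ℝ)⁻¹ * ∑ i, ‖x i k - xhat k‖ ^ 2 with hD
  set R : ℕ → ℝ := fun k => ‖xhat k - xs‖ ^ 2 with hR
  have hSnn : ∀ k, 0 ≤ S k := by intro k; rw [hS]; positivity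
  have hDnn : ∀ k, 0 ≤ D k := by intro k; rw [hD]; positivity
  have hRnn : ∀ k, 0 ≤ R k := by intro k; rw [hR]; positivity
  have hσnn : 0 ≤ σ2 := by rotate_left; rw [hσ2]; positivity
  have hH1 : (0 : ℝ) ≤ (H : ℝ) - 1 := by
    have : (1 : ℝ) ≤ (H : ℝ) := by exact_mod_cast hH
    linarith
  -- shifted representation of the mean residual
  have hgbshift : ∀ k, gb k = (M : ℝ)⁻¹ • ∑ i, (g i (x i k) - g i xs) := by
    intro k
    have h1 : ∑ i, (g i (x i k) - g i xs) = ∑ i, g i (x i k) := by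
      rw [Finset.sum_sub_distrib, hgstar, sub_zero]
    rw [hgb, h1]
  -- squared norm of a mean
  have hmsq : ∀ w : Fin M → EuclideanSpace ℝ (Fin d),
      ‖(M : ℝ)⁻¹ • ∑ i, w i‖ ^ 2 ≤ (M : ℝ)⁻¹ * ∑ i, ‖w i‖ ^ 2 := by
    intro w
    have h1 := aux_sum_sq (univ : Finset (Fin M)) w
    rw [card_univ, Fintype.card_fin] at h1
    have h2 : ‖(M : ℝ)⁻¹ • ∑ i, w i‖ ^ 2
        = (M : ℝ)⁻¹ * (M : ℝ)⁻¹ * ‖∑ i, w i‖ ^ 2 := by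
      rw [norm_smul, Real.norm_eq_abs, abs_of_nonneg (by positivity)]
      ring
    rw [h2]
    calc (M : ℝ)⁻¹ * (M : ℝ)⁻¹ * ‖∑ i, w i‖ ^ 2
        ≤ (M : ℝ)⁻¹ * (M : ℝ)⁻¹ * ((M : ℝ) * ∑ i, ‖w i‖ ^ 2) :=
          mul_le_mul_of_nonneg_left h1 (by positivity)
      _ = (M : ℝ)⁻¹ * ∑ i, ‖w i‖ ^ 2 := by field_simp
  have hgbsq : ∀ k, ‖gb k‖ ^ 2 ≤ S k := by
    intro k
    rw [hgbshift k, hS]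
    exact hmsq _
  -- inner ℝ product lower bound
  have hinner : ∀ k, S k / 2 - D k / 2 ≤ (inner ℝ (gb k) (xhat k - xs) : ℝ) := by
    intro k
    have hper : ∀ i : Fin M,
        ‖g i (x i k) - g i xs‖ ^ 2 / 2 - ‖x i k - xhat k‖ ^ 2 / 2
          ≤ (inner ℝ (g i (x i k) - g i xs) (xhat k - xs) : ℝ) := by
      intro i
      have hsplit : (inner ℝ (g i (x i k) - g i xs) (xhat k - xs) : ℝ)
          = inner ℝ (g i (x i k) - g i xs) (x i k - xs)
            + inner ℝ (g i (x i k) - g i xs) (xhat k - x i k) := by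
        rw [← inner_add_right]
        congr 1
        abel
      have h1 := hcoco i (x i k) xs
      have h2 := real_inner_le_norm (g i (x i k) - g i xs) (x i k - xhat k)
      have h3 : (inner ℝ (g i (x i k) - g i xs) (xhat k - x i k) : ℝ)
          = -inner ℝ (g i (x i k) - g i xs) (x i k - xhat k) := by
        rw [← inner_neg_right]
        congr 1
        abel
      have h4 := norm_nonneg (g i (x i k) - g i xs)
      have h5 := norm_nonneg (x i k - xhat k)
      rw [hsplit, h3]
      nlinarith [sq_nonneg (‖g i (x i k) - g i xs‖ - ‖x i k - xhat k‖)]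
    have hsum := Finset.sum_le_sum (fun i (_ : i ∈ (univ : Finset (Fin M))) => hper i)
    have heq : (inner ℝ (gb k) (xhat k - xs) : ℝ)
        = (M : ℝ)⁻¹ * ∑ i, (inner ℝ (g i (x i k) - g i xs) (xhat k - xs) : ℝ) := by
      rw [hgbshift k, real_inner_smul_left, sum_inner]
    have hexp : S k / 2 - D k / 2
        = (M : ℝ)⁻¹ * ∑ i, (‖g i (x i k) - g i xs‖ ^ 2 / 2 - ‖x i k - xhat k‖ ^ 2 / 2) := by
      rw [hS, hD, Finset.sum_sub_distrib, ← Finset.sum_div, ← Finset.sum_div]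
      ring
    rw [heq, hexp]
    exact mul_le_mul_of_nonneg_left hsum (by positivity)
  -- one-step descent inequality
  have hstep : ∀ k, R (k + 1) ≤ R k - l * (1 - l) * S k + l * D k := by
    intro k
    have hx1 : xhat (k + 1) - xs = (xhat k - xs) - l • gb k := by
      rw [hmean_rec k]
      abel
    have hexp : R (k + 1) = R k - 2 * (l * (inner ℝ (gb k) (xhat k - xs) : ℝ))
        + l ^ 2 * ‖gb k‖ ^ 2 := by
      simp only [hR]
      rw [hx1, aux_expand_sub]
      have hsm : (inner ℝ (xhat k - xs) (l • gb k) : ℝ)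
          = l * inner ℝ (gb k) (xhat k - xs) := by
        rw [real_inner_smul_right, real_inner_comm]
      rw [hsm, norm_smul, Real.norm_eq_abs, abs_of_nonneg hl0.le, mul_pow]
    rw [hexp]
    have h1 := mul_le_mul_of_nonneg_left (hinner k) (by positivity : (0:ℝ) ≤ 2 * l)
    have h2 := mul_le_mul_of_nonneg_left (hgbsq k) (sq_nonneg l)
    nlinarith [h1, h2]
  -- fixed-point residual of the mean
  have hGk : ∀ k, ‖xhat k - (M : ℝ)⁻¹ • ∑ i, A i (xhat k)‖ ^ 2 ≤ 2 * D k + 2 * S k := by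
    intro k
    have hrep : xhat k - (M : ℝ)⁻¹ • ∑ i, A i (xhat k)
        = (M : ℝ)⁻¹ • ∑ i, (g i (xhat k) - g i xs) := by
      have h1 : ∑ i, (g i (xhat k) - g i xs) = ∑ i, g i (xhat k) := by
        rw [Finset.sum_sub_distrib, hgstar, sub_zero]
      have h2 : ∑ i, g i (xhat k) = ∑ _i : Fin M, xhat k - ∑ i, A i (xhat k) := by
        rw [← Finset.sum_sub_distrib]
        exact Finset.sum_congr rfl fun i _ => by rw [hg]
      rw [h1, h2, smul_sub]
      congr 1
      exact (aux_mean_const hM _).symm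
    rw [hrep]
    refine (hmsq _).trans ?_
    have hper : ∀ i : Fin M, ‖g i (xhat k) - g i xs‖ ^ 2
        ≤ 2 * ‖x i k - xhat k‖ ^ 2 + 2 * ‖g i (x i k) - g i xs‖ ^ 2 := by
      intro i
      have h1 := aux_two_sq (g i (xhat k) - g i (x i k)) (g i (x i k) - g i xs)
      have he : g i (xhat k) - g i (x i k) + (g i (x i k) - g i xs)
          = g i (xhat k) - g i xs := by abel
      rw [he] at h1
      have h2 := hne2 i (xhat k) (x i k)
      have h3 : ‖xhat k - x i k‖ = ‖x i k - xhat k‖ := norm_sub_rev _ _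
      rw [h3] at h2
      linarith
    calc (M : ℝ)⁻¹ * ∑ i, ‖g i (xhat k) - g i xs‖ ^ 2
        ≤ (M : ℝ)⁻¹ * ∑ i, (2 * ‖x i k - xhat k‖ ^ 2 + 2 * ‖g i (x i k) - g i xs‖ ^ 2) :=
          mul_le_mul_of_nonneg_left (Finset.sum_le_sum fun i _ => hper i) (by positivity)
      _ = 2 * D k + 2 * S k := by
          rw [hD, hS, Finset.sum_add_distrib, ← Finset.mul_sum, ← Finset.mul_sum]
          ring
  -- variance of the residuals is bounded by 2 (S + σ²)
  have hVb : ∀ j, (M : ℝ)⁻¹ * ∑ i, ‖g i (x i j) - gb j‖ ^ 2 ≤ 2 * (S j + σ2) := by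
    intro j
    have h1 := aux_var hM (fun i => g i (x i j))
    have h2 : ∀ i : Fin M, ‖g i (x i j)‖ ^ 2
        ≤ 2 * ‖g i (x i j) - g i xs‖ ^ 2 + 2 * ‖g i xs‖ ^ 2 := by
      intro i
      have h := aux_two_sq (g i (x i j) - g i xs) (g i xs)
      have he : g i (x i j) - g i xs + g i xs = g i (x i j) := by abel
      rw [he] at h
      exact h
    have hσ' : σ2 = (M : ℝ)⁻¹ * ∑ i, ‖g i xs‖ ^ 2 := by
      rw [hσ2]
      congr 1
      exact Finset.sum_congr rfl fun i _ => by rw [hg]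
    have h4 : (M : ℝ)⁻¹ * ∑ i, ‖g i (x i j) - gb j‖ ^ 2
        ≤ (M : ℝ)⁻¹ * ∑ i, ‖g i (x i j)‖ ^ 2 := by
      refine mul_le_mul_of_nonneg_left ?_ (by positivity)
      simpa [hgb] using h1
    calc (M : ℝ)⁻¹ * ∑ i, ‖g i (x i j) - gb j‖ ^ 2
        ≤ (M : ℝ)⁻¹ * ∑ i, ‖g i (x i j)‖ ^ 2 := h4
      _ ≤ (M : ℝ)⁻¹ * ∑ i, (2 * ‖g i (x i j) - g i xs‖ ^ 2 + 2 * ‖g i xs‖ ^ 2) :=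
          mul_le_mul_of_nonneg_left (Finset.sum_le_sum fun i _ => h2 i) (by positivity)
      _ = 2 * (S j + σ2) := by
          rw [hS, hσ', Finset.sum_add_distrib, ← Finset.mul_sum, ← Finset.mul_sum]
          ring
  -- drift bound
  have hdrift : ∀ k, D k ≤ 2 * l ^ 2 * ((H : ℝ) - 1)
      * ∑ j ∈ Ico (k - (H - 1)) k, (S j + σ2) := by
    intro k
    obtain ⟨n, hn1, hn2, hn3⟩ := hex k
    have hnormD : ∀ i : Fin M, ‖x i k - xhat k‖ ^ 2
        ≤ l ^ 2 * ((H : ℝ) - 1) * ∑ jj ∈ Ico (t n) k, ‖g i (x i jj) - gb jj‖ ^ 2 := by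
      intro i
      rw [hblock n k hn1 hn2 i, norm_smul, Real.norm_eq_abs, abs_neg,
        abs_of_nonneg hl0.le, mul_pow]
      have h1 := aux_sum_sq (Ico (t n) k) (fun jj => g i (x i jj) - gb jj)
      rw [Nat.card_Ico] at h1
      have hcard : ((k - t n : ℕ) : ℝ) ≤ (H : ℝ) - 1 := by
        have hc1 : ((k - t n : ℕ) : ℝ) ≤ ((H - 1 : ℕ) : ℝ) := by exact_mod_cast hn3
        have hc2 : ((H - 1 : ℕ) : ℝ) = (H : ℝ) - 1 := by
          have := Nat.cast_sub (R := ℝ) hH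
          simpa using this
        rwa [hc2] at hc1
      have hsnn : (0:ℝ) ≤ ∑ jj ∈ Ico (t n) k, ‖g i (x i jj) - gb jj‖ ^ 2 := by positivity
      calc l ^ 2 * ‖∑ jj ∈ Ico (t n) k, (g i (x i jj) - gb jj)‖ ^ 2
          ≤ l ^ 2 * (((k - t n : ℕ) : ℝ) * ∑ jj ∈ Ico (t n) k, ‖g i (x i jj) - gb jj‖ ^ 2) :=
            mul_le_mul_of_nonneg_left h1 (sq_nonneg l)
        _ ≤ l ^ 2 * (((H : ℝ) - 1) * ∑ jj ∈ Ico (t n) k, ‖g i (x i jj) - gb jj‖ ^ 2) :=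
            mul_le_mul_of_nonneg_left (mul_le_mul_of_nonneg_right hcard hsnn) (sq_nonneg l)
        _ = l ^ 2 * ((H : ℝ) - 1) * ∑ jj ∈ Ico (t n) k, ‖g i (x i jj) - gb jj‖ ^ 2 := by
            ring
    have hD1 : D k ≤ (M : ℝ)⁻¹ * ∑ i, (l ^ 2 * ((H : ℝ) - 1)
        * ∑ jj ∈ Ico (t n) k, ‖g i (x i jj) - gb jj‖ ^ 2) := by
      rw [hD]
      exact mul_le_mul_of_nonneg_left (Finset.sum_le_sum fun i _ => hnormD i) (by positivity)
    have hD2 : D k ≤ l ^ 2 * ((H : ℝ) - 1) * ∑ jj ∈ Ico (t n) k, (2 * (S jj + σ2)) := by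
      refine hD1.trans ?_
      rw [aux_exchange]
      refine mul_le_mul_of_nonneg_left (Finset.sum_le_sum fun jj _ => hVb jj) ?_
      positivity
    have hsub : Ico (t n) k ⊆ Ico (k - (H - 1)) k := by
      intro j hj
      simp only [mem_Ico] at hj ⊢
      omega
    have hD3 : ∑ jj ∈ Ico (t n) k, (2 * (S jj + σ2))
        ≤ ∑ jj ∈ Ico (k - (H - 1)) k, (2 * (S jj + σ2)) := by
      refine Finset.sum_le_sum_of_subset_of_nonneg hsub fun j _ _ => ?_
      have := hSnn j
      linarith
    calc D k ≤ l ^ 2 * ((H : ℝ) - 1) * ∑ jj ∈ Ico (t n) k, (2 * (S jj + σ2)) := hD2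
      _ ≤ l ^ 2 * ((H : ℝ) - 1) * ∑ jj ∈ Ico (k - (H - 1)) k, (2 * (S jj + σ2)) :=
          mul_le_mul_of_nonneg_left hD3 (by positivity)
      _ = 2 * l ^ 2 * ((H : ℝ) - 1) * ∑ j ∈ Ico (k - (H - 1)) k, (S j + σ2) := by
          rw [← Finset.mul_sum]
          ring
  -- summations
  have hSGnn : 0 ≤ ∑ k ∈ range N, S k := Finset.sum_nonneg fun k _ => hSnn k
  have hSDnn : 0 ≤ ∑ k ∈ range N, D k := Finset.sum_nonneg fun k _ => hDnn k
  have hNpos : (0 : ℝ) < N := by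
    have : 0 < N := hN
    exact_mod_cast this
  -- telescoping descent
  have hsum1 : l * (1 - l) * ∑ k ∈ range N, S k
      ≤ R 0 + l * ∑ k ∈ range N, D k := by
    have h1 : ∑ k ∈ range N, (l * (1 - l) * S k - l * D k)
        ≤ ∑ k ∈ range N, (R k - R (k + 1)) :=
      Finset.sum_le_sum fun k _ => by have := hstep k; linarith
    have htel : ∑ k ∈ range N, (R k - R (k + 1)) = R 0 - R N :=
      Finset.sum_range_sub' R N
    have h2 : ∑ k ∈ range N, (l * (1 - l) * S k - l * D k)
        = l * (1 - l) * ∑ k ∈ range N, S k - l * ∑ k ∈ range N, D k := by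
      rw [Finset.sum_sub_distrib, Finset.mul_sum (range N) S (l * (1 - l)),
        Finset.mul_sum (range N) D l]
    rw [htel, h2] at h1
    have := hRnn N
    linarith
  -- total drift bound
  have hsum2 : ∑ k ∈ range N, D k
      ≤ 2 * l ^ 2 * ((H : ℝ) - 1) ^ 2 * (∑ k ∈ range N, S k + (N : ℝ) * σ2) := by
    have h1 : ∑ k ∈ range N, D k
        ≤ ∑ k ∈ range N, (2 * l ^ 2 * ((H : ℝ) - 1)
            * ∑ j ∈ Ico (k - (H - 1)) k, (S j + σ2)) :=
      Finset.sum_le_sum fun k _ => hdrift k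
    have h2 : ∑ k ∈ range N, (2 * l ^ 2 * ((H : ℝ) - 1)
            * ∑ j ∈ Ico (k - (H - 1)) k, (S j + σ2))
        = 2 * l ^ 2 * ((H : ℝ) - 1)
            * ∑ k ∈ range N, ∑ j ∈ Ico (k - (H - 1)) k, (S j + σ2) := by
      rw [Finset.mul_sum]
    have h3 := aux_swap (fun j => S j + σ2)
      (fun j => add_nonneg (hSnn j) hσnn) (H - 1) N
    have hc2 : ((H - 1 : ℕ) : ℝ) = (H : ℝ) - 1 := by
      have := Nat.cast_sub (R := ℝ) hH
      simpa using this
    rw [hc2] at h3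
    have h4 : ∑ j ∈ range N, (S j + σ2)
        = ∑ k ∈ range N, S k + (N : ℝ) * σ2 := by
      rw [Finset.sum_add_distrib, Finset.sum_const, Finset.card_range, nsmul_eq_mul]
    rw [h4] at h3
    have h5 : 2 * l ^ 2 * ((H : ℝ) - 1)
            * ∑ k ∈ range N, ∑ j ∈ Ico (k - (H - 1)) k, (S j + σ2)
        ≤ 2 * l ^ 2 * ((H : ℝ) - 1)
            * (((H : ℝ) - 1) * (∑ k ∈ range N, S k + (N : ℝ) * σ2)) :=
      mul_le_mul_of_nonneg_left h3 (by positivity)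
    calc ∑ k ∈ range N, D k
        ≤ 2 * l ^ 2 * ((H : ℝ) - 1)
            * ∑ k ∈ range N, ∑ j ∈ Ico (k - (H - 1)) k, (S j + σ2) := by
          rw [← h2]; exact h1
      _ ≤ 2 * l ^ 2 * ((H : ℝ) - 1)
            * (((H : ℝ) - 1) * (∑ k ∈ range N, S k + (N : ℝ) * σ2)) := h5
      _ = 2 * l ^ 2 * ((H : ℝ) - 1) ^ 2 * (∑ k ∈ range N, S k + (N : ℝ) * σ2) := by
          ring
  -- total residual bound
  have hsum3 : ∑ k ∈ range N, ‖xhat k - (M : ℝ)⁻¹ • ∑ i, A i (xhat k)‖ ^ 2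
      ≤ 2 * ∑ k ∈ range N, D k + 2 * ∑ k ∈ range N, S k := by
    calc ∑ k ∈ range N, ‖xhat k - (M : ℝ)⁻¹ • ∑ i, A i (xhat k)‖ ^ 2
        ≤ ∑ k ∈ range N, (2 * D k + 2 * S k) := Finset.sum_le_sum fun k _ => hGk k
      _ = 2 * ∑ k ∈ range N, D k + 2 * ∑ k ∈ range N, S k := by
          rw [Finset.sum_add_distrib, Finset.mul_sum (range N) D 2,
            Finset.mul_sum (range N) S 2]
  -- stepsize bounds
  have hmax1 : (1 : ℝ) ≤ max 1 ((H : ℝ) - 1) := le_max_left _ _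
  have hmaxpos : (0 : ℝ) < max 1 ((H : ℝ) - 1) := lt_of_lt_of_le one_pos hmax1
  have hl8 : l ≤ 1 / 8 := by
    refine hl1.trans (one_div_le_one_div_of_le (by norm_num) (by nlinarith [hmax1]))
  have hlm : l * ((H : ℝ) - 1) ≤ 1 / 8 := by
    have h1 : (H : ℝ) - 1 ≤ max 1 ((H : ℝ) - 1) := le_max_right _ _
    calc l * ((H : ℝ) - 1) ≤ (1 / (8 * max 1 ((H : ℝ) - 1))) * max 1 ((H : ℝ) - 1) :=
          mul_le_mul hl1 h1 hH1 (by positivity)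
      _ = 1 / 8 := by field_simp
  have hlmnn : 0 ≤ l * ((H : ℝ) - 1) := mul_nonneg hl0.le hH1
  have hlmsq : (l * ((H : ℝ) - 1)) * (l * ((H : ℝ) - 1)) ≤ 1 / 64 := by
    nlinarith
  -- main estimate
  have hR0 : R 0 = ‖x0 - xs‖ ^ 2 := by rw [hR]; simp only; rw [hxhat0]
  have hR0nn : 0 ≤ R 0 := hRnn 0
  have hkey : (0 : ℝ) ≤ (1 - 3 * l - 5 * (2 * l ^ 2 * ((H : ℝ) - 1) ^ 2))
      * (l * ∑ k ∈ range N, S k) := by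
    refine mul_nonneg ?_ (mul_nonneg hl0.le hSGnn)
    nlinarith
  have hA1 : l * ∑ k ∈ range N, D k
      ≤ l * (2 * l ^ 2 * ((H : ℝ) - 1) ^ 2 * (∑ k ∈ range N, S k + (N : ℝ) * σ2)) :=
    mul_le_mul_of_nonneg_left hsum2 hl0.le
  have hA2 : l * ∑ k ∈ range N, ‖xhat k - (M : ℝ)⁻¹ • ∑ i, A i (xhat k)‖ ^ 2
      ≤ l * (2 * ∑ k ∈ range N, D k + 2 * ∑ k ∈ range N, S k) :=
    mul_le_mul_of_nonneg_left hsum3 hl0.le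
  have hnnσ : 0 ≤ l * (2 * l ^ 2 * ((H : ℝ) - 1) ^ 2) * ((N : ℝ) * σ2) := by
    have : (0 : ℝ) ≤ (N : ℝ) * σ2 := mul_nonneg hNpos.le hσnn
    have h2 : (0 : ℝ) ≤ l * (2 * l ^ 2 * ((H : ℝ) - 1) ^ 2) :=
      mul_nonneg hl0.le (by positivity)
    exact mul_nonneg h2 this
  have main : l * ∑ k ∈ range N, ‖xhat k - (M : ℝ)⁻¹ • ∑ i, A i (xhat k)‖ ^ 2
      ≤ 3 * ‖x0 - xs‖ ^ 2 + 36 * l ^ 2 * ((H : ℝ) - 1) ^ 2 * σ2 * (l * (N : ℝ)) := by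
    rw [← hR0]
    nlinarith [hkey, hA1, hA2, hsum1, hR0nn, hnnσ]
  -- convert to the averaged form
  have hfinal : (N : ℝ)⁻¹ * ∑ k ∈ range N, ‖xhat k - (M : ℝ)⁻¹ • ∑ i, A i (xhat k)‖ ^ 2
      ≤ 3 * ‖x0 - xs‖ ^ 2 / (l * (N : ℝ)) + 36 * l ^ 2 * ((H : ℝ) - 1) ^ 2 * σ2 := by
    have hlN : (0 : ℝ) < l * (N : ℝ) := mul_pos hl0 hNpos
    have he1 : (N : ℝ)⁻¹ * ∑ k ∈ range N, ‖xhat k - (M : ℝ)⁻¹ • ∑ i, A i (xhat k)‖ ^ 2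
        = (l * ∑ k ∈ range N, ‖xhat k - (M : ℝ)⁻¹ • ∑ i, A i (xhat k)‖ ^ 2) / (l * (N : ℝ)) := by
      field_simp
    have he2 : 3 * ‖x0 - xs‖ ^ 2 / (l * (N : ℝ)) + 36 * l ^ 2 * ((H : ℝ) - 1) ^ 2 * σ2
        = (3 * ‖x0 - xs‖ ^ 2 + 36 * l ^ 2 * ((H : ℝ) - 1) ^ 2 * σ2 * (l * (N : ℝ)))
          / (l * (N : ℝ)) := by
      field_simp
    rw [he1, he2]
    exact (div_le_div_iff_of_pos_right hlN).mpr main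
  exact hfinal
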